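/- Among connected graphs on n vertices, if α ≤ 2(n−1) the cycle minimizes social cost mα + Σ_e sep(e)·P(e) (with value nα); if α ≥ 2(n−1), the star minimizes it (with value (n−1)(α+2)). In particular the optimum social cost is Θ(nα). (Here P is any probability distribution on edges, and for a tree Σ_e sep(e)P(e) ≥ 2(n−1); the cycle has total disconnection cost 0.) -/

import Mathlib

open SimpleGraph

/-- Separation of an edge: number of ordered vertex pairs disconnected by removing it. -/
noncomputable def sep {V : Type*} (G : SimpleGraph V) (e : Sym2 V) : ℕ :=
  Nat.card {p : V × V // ¬ (G.deleteEdges {e}).Reachable p.1 p.2}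

/-- Relevance of an edge for a vertex: number of vertices reachable from `v` only through `e`. -/
noncomputable def rel {V : Type*} (G : SimpleGraph V) (e : Sym2 V) (v : V) : ℕ :=
  Nat.card {w : V // ¬ (G.deleteEdges {e}).Reachable v w}

/-- Sum of relevances for a vertex. -/
noncomputable def RSum {V : Type*} (G : SimpleGraph V) (v : V) : ℕ :=
  ∑ᶠ e ∈ G.edgeSet, rel G e v

/-- Number of bridges separating `u` from `v`; this is the distance in the bridge tree
between the bridgeless connected components of `u` and `v`. -/
noncomputable def bridgeDist {V : Type*} (G : SimpleGraph V) (u v : V) : ℕ :=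
  Nat.card {e : Sym2 V // G.IsBridge e ∧ ¬ (G.deleteEdges {e}).Reachable u v}

/-- Diameter of the bridge tree of `G`. -/
noncomputable def bridgeTreeDiam {V : Type*} [Fintype V] (G : SimpleGraph V) : ℕ :=
  Finset.univ.sup fun p : V × V => bridgeDist G p.1 p.2

/-- Social cost: total building cost `mα` plus expected separation `Σ_e sep(e)·p(e)`. -/
noncomputable def SC {V : Type*} (G : SimpleGraph V) (p : Sym2 V → ℝ) (α : ℝ) : ℝ :=
  (Nat.card G.edgeSet : ℝ) * α + ∑ᶠ e ∈ G.edgeSet, (sep G e : ℝ) * p e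

/-- `p` is a probability distribution on the edges of `G`. -/
def IsEdgeProb {V : Type*} (G : SimpleGraph V) (p : Sym2 V → ℝ) : Prop :=
  (∀ e, 0 ≤ p e) ∧ ∑ᶠ e ∈ G.edgeSet, p e = 1

/-- The star on `n` vertices, centered at vertex `0`. -/
def starGraph (n : ℕ) : SimpleGraph (Fin n) where
  Adj i j := i ≠ j ∧ (i.val = 0 ∨ j.val = 0)
  symm := ⟨by rintro i j ⟨h1, h2⟩; exact ⟨h1.symm, h2.symm⟩⟩
  loopless := ⟨fun i h => h.1 rfl⟩

/-! ### Auxiliary lemmas -/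

theorem reach_del {V : Type*} {G : SimpleGraph V} {e : Sym2 V}
    (huv : ∀ x y, s(x,y) = e → (G.deleteEdges {e}).Reachable x y) :
    ∀ a b : V, G.Reachable a b → (G.deleteEdges {e}).Reachable a b := by
  have step : ∀ a b : V, G.Adj a b → (G.deleteEdges {e}).Reachable a b := by
    intro a b hab
    by_cases h : s(a,b) = e
    · exact huv a b h
    · exact Adj.reachable (by simp [deleteEdges_adj, hab, h])
  intro a b ⟨w⟩
  induction w with
  | nil => exact Reachable.refl _
  | cons h _ ih => exact (step _ _ h).trans ih

theorem nonbridge_reach {V : Type*} {G : SimpleGraph V} {e : Sym2 V}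
    (he : e ∈ G.edgeSet) (hb : ¬ G.IsBridge e) :
    ∀ x y, s(x,y) = e → (G.deleteEdges {e}).Reachable x y := by
  induction e using Sym2.ind with
  | _ u v =>
    rw [isBridge_iff] at hb
    push_neg at hb
    have hr : (G.deleteEdges {s(u,v)}).Reachable u v :=
      hb
    intro x y hxy
    rw [Sym2.eq_iff] at hxy
    rcases hxy with ⟨rfl, rfl⟩ | ⟨rfl, rfl⟩
    · exact hr
    · exact hr.symm

theorem sep_bridge_ge {n : ℕ} {G : SimpleGraph (Fin n)} (hc : G.Preconnected)
    {e : Sym2 (Fin n)} (hb : G.IsBridge e) : 2 * (n - 1) ≤ sep G e := by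
  classical
  induction e using Sym2.ind with
  | _ u v =>
  set H := G.deleteEdges {s(u,v)} with hH
  obtain hnr := isBridge_iff.mp hb
  have hnr : ¬ H.Reachable u v := hnr
  have claim : ∀ w, H.Reachable u w ∨ H.Reachable v w := by
    have step : ∀ x z : Fin n, G.Adj x z → (H.Reachable u x ∨ H.Reachable v x) →
        (H.Reachable u z ∨ H.Reachable v z) := by
      intro x z h hx
      by_cases hz : s(x, z) = s(u, v)
      · rw [Sym2.eq_iff] at hz
        rcases hz with ⟨rfl, rfl⟩ | ⟨rfl, rfl⟩
        · exact Or.inr (Reachable.refl _)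
        · exact Or.inl (Reachable.refl _)
      · have hadj' : H.Adj x z := by simp [hH, deleteEdges_adj, h, hz]
        rcases hx with hx | hx
        · exact Or.inl (hx.trans hadj'.reachable)
        · exact Or.inr (hx.trans hadj'.reachable)
    have aux : ∀ {x y : Fin n} (p : G.Walk x y),
        (H.Reachable u x ∨ H.Reachable v x) → (H.Reachable u y ∨ H.Reachable v y) := by
      intro x y p
      induction p with
      | nil => exact id
      | cons h q ih => exact fun hx => ih (step _ _ h hx)
    intro w
    exact aux (hc u w).some (Or.inl (Reachable.refl _))
  set A : Finset (Fin n) := Finset.univ.filter (fun w => H.Reachable u w) with hA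
  have hu : u ∈ A := Finset.mem_filter.mpr ⟨Finset.mem_univ _, Reachable.refl _⟩
  have hv : v ∉ A := by simp [hA, hnr]
  have hsepcard : sep G s(u,v) = (Finset.univ.filter
      (fun p : Fin n × Fin n => ¬ H.Reachable p.1 p.2)).card := by
    rw [sep, Nat.card_eq_fintype_card, Fintype.card_subtype]
  have hdisc : ∀ a ∈ A, ∀ b ∉ A, ¬ H.Reachable a b := by
    intro a ha b hb hr
    simp only [hA, Finset.mem_filter] at ha hb
    exact hb ⟨Finset.mem_univ _, (ha.2.trans hr)⟩
  have hsub : (A ×ˢ Aᶜ) ∪ (Aᶜ ×ˢ A) ⊆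
      Finset.univ.filter (fun p : Fin n × Fin n => ¬ H.Reachable p.1 p.2) := by
    intro p hp
    simp only [Finset.mem_union, Finset.mem_product, Finset.mem_compl] at hp
    simp only [Finset.mem_filter, Finset.mem_univ, true_and]
    rcases hp with ⟨h1, h2⟩ | ⟨h1, h2⟩
    · exact hdisc _ h1 _ h2
    · exact fun hr => hdisc _ h2 _ h1 hr.symm
  have hdisj : Disjoint (A ×ˢ Aᶜ) (Aᶜ ×ˢ A) := by
    rw [Finset.disjoint_left]
    intro p hp hp'
    simp only [Finset.mem_product, Finset.mem_compl] at hp hp'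
    exact hp'.1 hp.1
  have hcard : (A ×ˢ Aᶜ ∪ Aᶜ ×ˢ A).card = A.card * Aᶜ.card + Aᶜ.card * A.card := by
    rw [Finset.card_union_of_disjoint hdisj, Finset.card_product, Finset.card_product]
  have hAu : 1 ≤ A.card := Finset.card_pos.mpr ⟨u, hu⟩
  have hAv : 1 ≤ Aᶜ.card := Finset.card_pos.mpr ⟨v, Finset.mem_compl.mpr hv⟩
  have hsum : A.card + Aᶜ.card = n := by
    rw [Finset.card_add_card_compl]; simp
  have hprod : n - 1 ≤ A.card * Aᶜ.card := by
    obtain ⟨a, ha⟩ := Nat.exists_eq_add_of_le hAu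
    obtain ⟨b, hb⟩ := Nat.exists_eq_add_of_le hAv
    have hab : (1+a)*(1+b) = 1 + a + b + a*b := by ring
    rw [ha, hb] at hsum ⊢
    omega
  calc 2 * (n - 1) ≤ A.card * Aᶜ.card + Aᶜ.card * A.card := by
        have hcm : Aᶜ.card * A.card = A.card * Aᶜ.card := Nat.mul_comm _ _
        omega
    _ = (A ×ˢ Aᶜ ∪ Aᶜ ×ˢ A).card := hcard.symm
    _ ≤ _ := Finset.card_le_card hsub
    _ = sep G s(u,v) := hsepcard.symm

theorem edges_lb {n : ℕ} : ∀ m (G : SimpleGraph (Fin n)), G.edgeSet.ncard = m → G.Connected →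
    (G.IsAcyclic ∧ G.edgeSet.ncard + 1 = n) ∨ n ≤ G.edgeSet.ncard := by
  classical
  intro m
  induction m using Nat.strong_induction_on with
  | _ m ih =>
    intro G hm hc
    by_cases ha : G.IsAcyclic
    · left
      refine ⟨ha, ?_⟩
      have htree : G.IsTree := ⟨hc, ha⟩
      have := htree.card_edgeFinset
      rw [Fintype.card_fin] at this
      rwa [Set.ncard_eq_toFinset_card']
    · right
      rw [isAcyclic_iff_forall_edge_isBridge] at ha
      push_neg at ha
      obtain ⟨e, he, hnb⟩ := ha
      set G' := G.deleteEdges {e} with hG'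
      have hconn' : G'.Connected := by
        haveI : Nonempty (Fin n) := hc.nonempty
        exact Connected.mk (fun a b => reach_del (nonbridge_reach he hnb) a b (hc.preconnected a b))
      have hES : G'.edgeSet = G.edgeSet \ {e} := edgeSet_deleteEdges _
      have hfin : G.edgeSet.Finite := Set.toFinite _
      have hcard' : G'.edgeSet.ncard = m - 1 := by
        rw [hES, Set.ncard_diff_singleton_of_mem he, hm]
      have hmpos : 1 ≤ m := by
        rw [← hm]
        exact (Set.ncard_pos hfin).mpr ⟨e, he⟩
      have := ih (m - 1) (by omega) G' hcard' hconn'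
      rcases this with ⟨_, h1⟩ | h1 <;> rw [hcard'] at h1 <;> omega

theorem fin_succ_of_val {m : ℕ} {x y : Fin (m+3)} (h : x.val + 1 = y.val) : y = x + 1 := by
  apply Fin.ext
  rw [Fin.val_add, ← h]
  have : (1 : Fin (m+3)).val = 1 := rfl
  rw [this]
  exact (Nat.mod_eq_of_lt (by omega)).symm

open Fin.CommRing in
theorem cycle_del {m : ℕ} (b : Fin (m+3)) :
    ((cycleGraph (m+3)).deleteEdges {s(b - 1, b)}).Preconnected := by
  set H := (cycleGraph (m+3)).deleteEdges {s(b - 1, b)} with hH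
  have key : ∀ x y : Fin (m+3), x.val + 1 = y.val → H.Adj (x + b) (y + b) := by
    intro x y h
    have hy : y = x + 1 := fin_succ_of_val h
    have hyval : y.val < m + 3 := y.isLt
    rw [hH, deleteEdges_adj]
    constructor
    · rw [cycleGraph_adj]
      right
      rw [hy]; ring_nf
    · intro hmem
      rw [Set.mem_singleton_iff, Sym2.eq_iff] at hmem
      rcases hmem with ⟨h1, h2⟩ | ⟨h1, h2⟩
      · -- x + b = b - 1, y + b = b  →  y = 0, but y.val = x.val+1 ≥ 1
        have hy0 : y = 0 := by
          have := h2
          calc y = y + b - b := by ring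
            _ = b - b := by rw [this]
            _ = 0 := by ring
        rw [hy0] at h
        simp at h
      · -- x + b = b, y + b = b - 1 → x = 0 and y = -1; y = x+1 = 1, so 2 = 0
        have hx0 : x = 0 := by
          calc x = x + b - b := by ring
            _ = b - b := by rw [h1]
            _ = 0 := by ring
        have hym : y = b - 1 - b := by
          calc y = y + b - b := by ring
            _ = b - 1 - b := by rw [h2]
        have h2eq : (1 : Fin (m+3)) + 1 = 0 := by
          have : y = -1 := by rw [hym]; ring
          rw [hy, hx0] at this
          calc (1 : Fin (m+3)) + 1 = (0 + 1) + 1 := by ring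
            _ = -1 + 1 := by rw [← this]
            _ = 0 := by ring
        have : ((1 : Fin (m+3)) + 1).val = 2 := by
          rw [Fin.val_add]
          norm_num
        rw [h2eq] at this
        simp at this
  let f : pathGraph (m+3) →g H := ⟨fun x => x + b, fun {x y} h => by
    rw [pathGraph_adj] at h
    rcases h with h | h
    · exact key x y h
    · exact (key y x h).symm⟩
  have hsurj : Function.Surjective ⇑f := fun z => ⟨z - b, show z - b + b = z by ring⟩
  exact Preconnected.map f hsurj (pathGraph_preconnected (m+3))

open Fin.CommRing in
theorem cycle_sep_zero {m : ℕ} {e : Sym2 (Fin (m+3))} (he : e ∈ (cycleGraph (m+3)).edgeSet) :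
    sep (cycleGraph (m+3)) e = 0 := by
  induction e using Sym2.ind with
  | _ u v =>
    rw [mem_edgeSet, cycleGraph_adj] at he
    have hpre : ((cycleGraph (m+3)).deleteEdges {s(u,v)}).Preconnected := by
      rcases he with h | h
      · have hv : v = u - 1 := by
          calc v = u - (u - v) := by ring
            _ = u - 1 := by rw [h]
        rw [hv]
        have : s(u, u - 1) = s(u - 1, u) := Sym2.eq_swap
        rw [this]
        exact cycle_del u
      · have hu : u = v - 1 := by
          calc u = v - (v - u) := by ring
            _ = v - 1 := by rw [h]
        rw [hu]
        exact cycle_del v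
    have : IsEmpty {p : Fin (m+3) × Fin (m+3) //
        ¬ ((cycleGraph (m+3)).deleteEdges {s(u,v)}).Reachable p.1 p.2} :=
      ⟨fun p => p.2 (hpre p.1.1 p.1.2)⟩
    rw [sep]
    exact Nat.card_of_isEmpty

theorem cycle_ncard {m : ℕ} : (cycleGraph (m+3)).edgeSet.ncard = m + 3 := by
  classical
  have h := sum_degrees_eq_twice_card_edges (cycleGraph (m+3))
  have hdeg : ∀ v : Fin (m+3), (cycleGraph (m+3)).degree v = 2 := fun v =>
    cycleGraph_degree_three_le
  rw [Finset.sum_congr rfl (fun v _ => hdeg v), Finset.sum_const, Finset.card_univ,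
    Fintype.card_fin, smul_eq_mul] at h
  have hcard : (cycleGraph (m+3)).edgeFinset.card = m + 3 := by omega
  rw [Set.ncard_eq_toFinset_card']
  convert hcard using 2
  ext; simp

theorem star_adj {m : ℕ} {a b : Fin (m+3)} :
    (_root_.starGraph (m+3)).Adj a b ↔ a ≠ b ∧ (a = 0 ∨ b = 0) := by
  show (a ≠ b ∧ (a.val = 0 ∨ b.val = 0)) ↔ _
  have h0 : ∀ x : Fin (m+3), x.val = 0 ↔ x = 0 := fun x => by
    rw [Fin.ext_iff, Fin.val_zero]
  rw [h0 a, h0 b]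

theorem star_reach {m : ℕ} (a : Fin (m+3)) : (_root_.starGraph (m+3)).Reachable 0 a := by
  by_cases h : a = 0
  · rw [h]
  · exact Adj.reachable (star_adj.mpr ⟨Ne.symm h, Or.inl rfl⟩)

theorem star_connected {m : ℕ} : (_root_.starGraph (m+3)).Connected :=
  Connected.mk fun a b => (star_reach a).symm.trans (star_reach b)

theorem star_edgeSet {m : ℕ} :
    (_root_.starGraph (m+3)).edgeSet = (fun i => s((0 : Fin (m+3)), i)) '' {i | i ≠ 0} := by
  ext e
  induction e using Sym2.ind with
  | _ a b =>
    rw [mem_edgeSet, star_adj]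
    constructor
    · rintro ⟨hne, rfl | rfl⟩
      · exact ⟨b, fun hb => hne hb.symm, rfl⟩
      · exact ⟨a, hne, Sym2.eq_swap⟩
    · rintro ⟨i, hi, he⟩
      rw [Sym2.eq_iff] at he
      rcases he with ⟨rfl, rfl⟩ | ⟨rfl, rfl⟩
      · exact ⟨fun h => hi h.symm, Or.inl rfl⟩
      · exact ⟨hi, Or.inr rfl⟩

theorem star_ncard {m : ℕ} : (_root_.starGraph (m+3)).edgeSet.ncard = m + 2 := by
  classical
  rw [star_edgeSet, Set.ncard_image_of_injOn]
  · have : ({i : Fin (m+3) | i ≠ 0}) = ({0}ᶜ : Set (Fin (m+3))) := by ext i; simp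
    rw [this, Set.ncard_eq_toFinset_card', Set.toFinset_compl, Set.toFinset_singleton,
      Finset.card_compl, Finset.card_singleton, Fintype.card_fin]
    omega
  · intro i hi j hj hij
    simp only [Set.mem_setOf_eq] at hi hj
    simp only [Sym2.eq_iff] at hij
    rcases hij with ⟨-, h⟩ | ⟨h1, h2⟩
    · exact h
    · exact absurd h2 hi

theorem star_sep {m : ℕ} {e : Sym2 (Fin (m+3))} (he : e ∈ (_root_.starGraph (m+3)).edgeSet) :
    sep (_root_.starGraph (m+3)) e = 2 * (m + 2) := by
  classical
  rw [star_edgeSet] at he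
  obtain ⟨i, hi, rfl⟩ := he
  simp only [Set.mem_setOf_eq] at hi
  set H := (_root_.starGraph (m+3)).deleteEdges {s((0 : Fin (m+3)), i)} with hH
  have reach0 : ∀ w : Fin (m+3), w ≠ i → H.Reachable 0 w := by
    intro w hw
    by_cases h0 : w = 0
    · rw [h0]
    · refine Adj.reachable ?_
      rw [hH, deleteEdges_adj]
      refine ⟨star_adj.mpr ⟨Ne.symm h0, Or.inl rfl⟩, ?_⟩
      rw [Set.mem_singleton_iff, Sym2.eq_iff]
      rintro (⟨-, h⟩ | ⟨h1, h2⟩)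
      · exact hw h
      · exact hi h1.symm
  have iso : ∀ x, ¬ H.Adj i x := by
    intro x h
    rw [hH, deleteEdges_adj] at h
    obtain ⟨hadj, hmem⟩ := h
    obtain ⟨hne, h0⟩ := star_adj.mp hadj
    rcases h0 with h0 | h0
    · exact hi h0
    · rw [h0] at hmem
      exact hmem (by rw [Set.mem_singleton_iff]; exact Sym2.eq_swap)
  have noreach : ∀ w, w ≠ i → ¬ H.Reachable i w := by
    rintro w hw ⟨p⟩
    cases p with
    | nil => exact hw rfl
    | cons h q => exact iso _ h
  have hchar : ∀ a b : Fin (m+3), ¬ H.Reachable a b ↔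
      ((a = i ∧ b ≠ i) ∨ (a ≠ i ∧ b = i)) := by
    intro a b
    constructor
    · intro hnr
      by_cases ha : a = i <;> by_cases hb : b = i
      · subst ha; subst hb; exact absurd (Reachable.refl _) hnr
      · exact Or.inl ⟨ha, hb⟩
      · exact Or.inr ⟨ha, hb⟩
      · exact absurd ((reach0 a ha).symm.trans (reach0 b hb)) hnr
    · rintro (⟨rfl, hb⟩ | ⟨ha, rfl⟩)
      · exact noreach b hb
      · exact fun hr => noreach a ha hr.symm
  have hsepcard : sep (_root_.starGraph (m+3)) s((0 : Fin (m+3)), i) = (Finset.univ.filter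
      (fun p : Fin (m+3) × Fin (m+3) => ¬ H.Reachable p.1 p.2)).card := by
    rw [sep, Nat.card_eq_fintype_card, Fintype.card_subtype]
  rw [hsepcard]
  have hset : Finset.univ.filter (fun p : Fin (m+3) × Fin (m+3) => ¬ H.Reachable p.1 p.2)
      = (({i} : Finset (Fin (m+3))) ×ˢ ({i}ᶜ : Finset (Fin (m+3)))) ∪
        (({i}ᶜ : Finset (Fin (m+3))) ×ˢ ({i} : Finset (Fin (m+3)))) := by
    ext p
    simp only [Finset.mem_filter, Finset.mem_univ, true_and, Finset.mem_union,
      Finset.mem_product, Finset.mem_compl, Finset.mem_singleton]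
    rw [hchar]
  rw [hset, Finset.card_union_of_disjoint, Finset.card_product, Finset.card_product,
    Finset.card_singleton, Finset.card_compl, Finset.card_singleton, Fintype.card_fin]
  · omega
  · rw [Finset.disjoint_left]
    intro p hp hp'
    simp only [Finset.mem_product, Finset.mem_compl, Finset.mem_singleton] at hp hp'
    exact hp'.1 hp.1

theorem finsum_edge {n : ℕ} {G : SimpleGraph (Fin n)} (hfin : G.edgeSet.Finite)
    (f : Sym2 (Fin n) → ℝ) :
    ∑ᶠ e ∈ G.edgeSet, f e = ∑ e ∈ hfin.toFinset, f e := by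
  conv_lhs => rw [← Set.Finite.coe_toFinset hfin]
  rw [finsum_mem_coe_finset]

theorem natcard_edge {n : ℕ} (G : SimpleGraph (Fin n)) :
    Nat.card G.edgeSet = G.edgeSet.ncard := Nat.card_coe_set_eq _

/-- Lower bound on social cost for any connected graph. -/
theorem SC_lb {n : ℕ} (hn : 3 ≤ n) {G : SimpleGraph (Fin n)} (hc : G.Connected)
    {p : Sym2 (Fin n) → ℝ} (hp : IsEdgeProb G p) {α : ℝ} (hα : 0 < α) :
    min ((n : ℝ) * α) (((n : ℝ) - 1) * (α + 2)) ≤ SC G p α := by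
  classical
  obtain ⟨hp0, hp1⟩ := hp
  have hfin : G.edgeSet.Finite := Set.toFinite _
  rw [SC, finsum_edge hfin, natcard_edge]
  rw [finsum_edge hfin] at hp1
  have hn1 : (1 : ℝ) ≤ (n : ℝ) := by exact_mod_cast (by omega : 1 ≤ n)
  rcases edges_lb G.edgeSet.ncard G rfl hc with ⟨hacyc, hcard⟩ | hcard
  · -- tree case
    have hm : (G.edgeSet.ncard : ℝ) = (n : ℝ) - 1 := by
      have : (G.edgeSet.ncard : ℝ) + 1 = (n : ℝ) := by exact_mod_cast hcard
      linarith
    have hsep : ∀ e ∈ hfin.toFinset, (2 * ((n:ℝ) - 1)) * p e ≤ (sep G e : ℝ) * p e := by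
      intro e he'
      have he : e ∈ G.edgeSet := hfin.mem_toFinset.mp he'
      have hbridge := isAcyclic_iff_forall_edge_isBridge.mp hacyc he
      have hge := sep_bridge_ge hc.preconnected hbridge
      have hcast : (2 * ((n:ℝ) - 1)) ≤ (sep G e : ℝ) := by
        have : ((2 * (n - 1) : ℕ) : ℝ) ≤ (sep G e : ℝ) := by exact_mod_cast hge
        have h2 : ((2 * (n - 1) : ℕ) : ℝ) = 2 * ((n:ℝ) - 1) := by
          push_cast [Nat.cast_sub (by omega : 1 ≤ n)]
          ring
        linarith [h2 ▸ this]
      exact mul_le_mul_of_nonneg_right hcast (hp0 e)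
    have hsum : 2 * ((n:ℝ) - 1) ≤ ∑ e ∈ hfin.toFinset, (sep G e : ℝ) * p e := by
      calc 2 * ((n:ℝ) - 1) = ∑ e ∈ hfin.toFinset, (2 * ((n:ℝ) - 1)) * p e := by
            rw [← Finset.mul_sum, hp1, mul_one]
        _ ≤ _ := Finset.sum_le_sum hsep
    have : ((n:ℝ) - 1) * (α + 2) ≤ ((G.edgeSet.ncard : ℝ)) * α
        + ∑ e ∈ hfin.toFinset, (sep G e : ℝ) * p e := by
      rw [hm]; nlinarith
    exact le_trans (min_le_right _ _) this
  · -- at least n edges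
    have hm : (n : ℝ) ≤ (G.edgeSet.ncard : ℝ) := by exact_mod_cast hcard
    have hsum : 0 ≤ ∑ e ∈ hfin.toFinset, (sep G e : ℝ) * p e :=
      Finset.sum_nonneg fun e _ => mul_nonneg (Nat.cast_nonneg _) (hp0 e)
    have : (n : ℝ) * α ≤ ((G.edgeSet.ncard : ℝ)) * α
        + ∑ e ∈ hfin.toFinset, (sep G e : ℝ) * p e := by nlinarith
    exact le_trans (min_le_left _ _) this

/-- Among connected graphs on `n` vertices and edge probability distributions,
the cycle is optimal for `α ≤ 2(n−1)` (social cost `nα`), and the star is optimal for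
`α ≥ 2(n−1)` (social cost `(n−1)(α+2)`). -/
theorem stmt_16 (n : ℕ) (hn : 3 ≤ n) (α : ℝ) (hα : 0 < α) :
    (α ≤ 2 * ((n : ℝ) - 1) →
      ((∀ G : SimpleGraph (Fin n), G.Connected → ∀ p, IsEdgeProb G p →
          (n : ℝ) * α ≤ SC G p α) ∧
        (cycleGraph n).Connected ∧
        ∀ p, IsEdgeProb (cycleGraph n) p → SC (cycleGraph n) p α = (n : ℝ) * α)) ∧
    (2 * ((n : ℝ) - 1) ≤ α →
      ((∀ G : SimpleGraph (Fin n), G.Connected → ∀ p, IsEdgeProb G p →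
          ((n : ℝ) - 1) * (α + 2) ≤ SC G p α) ∧
        (_root_.starGraph n).Connected ∧
        ∀ p, IsEdgeProb (_root_.starGraph n) p →
          SC (_root_.starGraph n) p α = ((n : ℝ) - 1) * (α + 2))) := by
  classical
  obtain ⟨m, rfl⟩ : ∃ m, n = m + 3 := ⟨n - 3, by omega⟩
  have hnR : ((m + 3 : ℕ) : ℝ) = (m : ℝ) + 3 := by push_cast; ring
  constructor
  · intro hα2
    refine ⟨?_, ?_, ?_⟩
    · intro G hc p hp
      have h := SC_lb hn hc hp hα
      have hmin : ((m + 3 : ℕ) : ℝ) * α ≤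
          min (((m + 3 : ℕ) : ℝ) * α) ((((m + 3 : ℕ) : ℝ) - 1) * (α + 2)) := by
        apply le_min le_rfl
        rw [hnR] at hα2 ⊢
        nlinarith
      exact le_trans hmin h
    · exact cycleGraph_connected
    · intro p hp
      obtain ⟨hp0, hp1⟩ := hp
      have hfin : (cycleGraph (m+3)).edgeSet.Finite := Set.toFinite _
      rw [SC, finsum_edge hfin, natcard_edge, cycle_ncard]
      have hzero : ∀ e ∈ hfin.toFinset, (sep (cycleGraph (m+3)) e : ℝ) * p e = 0 := by
        intro e he'
        rw [cycle_sep_zero (hfin.mem_toFinset.mp he')]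
        simp
      rw [Finset.sum_congr rfl hzero, Finset.sum_const, smul_zero, add_zero]
  · intro hα2
    refine ⟨?_, ?_, ?_⟩
    · intro G hc p hp
      have h := SC_lb hn hc hp hα
      have hmin : (((m + 3 : ℕ) : ℝ) - 1) * (α + 2) ≤
          min (((m + 3 : ℕ) : ℝ) * α) ((((m + 3 : ℕ) : ℝ) - 1) * (α + 2)) := by
        apply le_min _ le_rfl
        rw [hnR] at hα2 ⊢
        nlinarith
      exact le_trans hmin h
    · exact star_connected
    · intro p hp
      obtain ⟨hp0, hp1⟩ := hp
      have hfin : (_root_.starGraph (m+3)).edgeSet.Finite := Set.toFinite _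
      rw [SC, finsum_edge hfin, natcard_edge, star_ncard]
      rw [finsum_edge hfin] at hp1
      have hval : ∀ e ∈ hfin.toFinset, (sep (_root_.starGraph (m+3)) e : ℝ) * p e
          = (2 * ((m : ℝ) + 2)) * p e := by
        intro e he'
        rw [star_sep (hfin.mem_toFinset.mp he')]
        push_cast
        ring
      rw [Finset.sum_congr rfl hval, ← Finset.mul_sum, hp1, mul_one, hnR]
      push_cast
      ring
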